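/- If all arc costs are integer and ε < 1/n, then any ε-optimal feasible flow is an optimal solution of the minimum-cost flow problem. -/

import Mathlib

open Finset

variable {V A : Type}

/-- Excess of node `i` with respect to pseudoflow `x` and supplies `b`. -/
def excess [Fintype A] [DecidableEq V] (src tgt : A → V) (b : V → ℤ)
    (x : A → ℤ) (i : V) : ℤ :=
  b i + ∑ a ∈ Finset.univ.filter (fun a => tgt a = i), x a
      - ∑ a ∈ Finset.univ.filter (fun a => src a = i), x a

/-- A pseudoflow obeys the nonnegativity and capacity constraints. -/
def IsPseudoflow (cap x : A → ℤ) : Prop := ∀ a, 0 ≤ x a ∧ x a ≤ cap a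

/-- A feasible flow: pseudoflow satisfying the conservation constraints. -/
def IsFeasible [Fintype A] [DecidableEq V] (src tgt : A → V) (b : V → ℤ)
    (cap x : A → ℤ) : Prop :=
  IsPseudoflow cap x ∧ ∀ i, excess src tgt b x i = 0

/-- Total cost of a flow. -/
def flowCost [Fintype A] (c x : A → ℤ) : ℤ := ∑ a, c a * x a

/-- An optimal solution of the minimum-cost flow problem. -/
def IsOptimal [Fintype A] [DecidableEq V] (src tgt : A → V) (b : V → ℤ)
    (cap c x : A → ℤ) : Prop :=
  IsFeasible src tgt b cap x ∧
    ∀ y, IsFeasible src tgt b cap y → flowCost c x ≤ flowCost c y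

/-- Source of a residual arc: `(a, true)` is the forward copy of `a`,
`(a, false)` the backward copy. -/
def rsrc (src tgt : A → V) (p : A × Bool) : V := if p.2 then src p.1 else tgt p.1

/-- Target of a residual arc. -/
def rtgt (src tgt : A → V) (p : A × Bool) : V := if p.2 then tgt p.1 else src p.1

/-- Cost of a residual arc. -/
def rcost (c : A → ℤ) (p : A × Bool) : ℤ := if p.2 then c p.1 else -c p.1

/-- Whether a (forward/backward) arc is present in the residual network of `x`. -/
def IsResidual (cap x : A → ℤ) (p : A × Bool) : Prop :=
  if p.2 then x p.1 < cap p.1 else 0 < x p.1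

/-- Reduced cost of a residual arc with respect to potentials `π`. -/
def redcost (src tgt : A → V) (c : A → ℤ) (π : V → ℝ) (p : A × Bool) : ℝ :=
  (rcost c p : ℝ) + π (rsrc src tgt p) - π (rtgt src tgt p)

/-- A directed cycle (closed directed walk), given by `k > 0` arcs in cyclic order. -/
def IsCycle {E : Type} (s t : E → V) {k : ℕ} (hk : 0 < k) (cyc : Fin k → E) : Prop :=
  ∀ i : Fin k, t (cyc i) = s (cyc ⟨(i.1 + 1) % k, Nat.mod_lt _ hk⟩)

/-- Underlying undirected (simple) graph of the arcs in `T`. -/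
def underlying (src tgt : A → V) (T : Finset A) : SimpleGraph V where
  Adj i j := i ≠ j ∧ ∃ a ∈ T, (src a = i ∧ tgt a = j) ∨ (src a = j ∧ tgt a = i)
  symm := by
    refine ⟨?_⟩
    rintro i j ⟨hij, a, haT, h⟩
    exact ⟨hij.symm, a, haT, h.symm⟩
  loopless := by refine ⟨?_⟩; rintro i ⟨h, -⟩; exact h rfl

/-- Total excess of the excess nodes. -/
def totalExcess [Fintype V] [Fintype A] [DecidableEq V]
    (src tgt : A → V) (b : V → ℤ) (x : A → ℤ) : ℤ :=
  ∑ i ∈ Finset.univ.filter (fun i => 0 < excess src tgt b x i), excess src tgt b x i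

def nxtI {k : ℕ} (hk : 0 < k) (i : Fin k) : Fin k := ⟨(i.1 + 1) % k, Nat.mod_lt _ hk⟩
def prvI {k : ℕ} (hk : 0 < k) (i : Fin k) : Fin k := ⟨(i.1 + (k-1)) % k, Nat.mod_lt _ hk⟩
lemma nxtI_bij {k : ℕ} (hk : 0 < k) : Function.Bijective (nxtI hk) := by
  have h1 : ∀ i, nxtI hk (prvI hk i) = i := by
    intro i; apply Fin.ext
    simp only [nxtI, prvI, Nat.mod_add_mod]
    have : i.1 + (k-1) + 1 = i.1 + k := by omega
    rw [this, Nat.add_mod_right, Nat.mod_eq_of_lt i.2]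
  have h2 : ∀ i, prvI hk (nxtI hk i) = i := by
    intro i; apply Fin.ext
    simp only [nxtI, prvI, Nat.mod_add_mod]
    have : i.1 + 1 + (k-1) = i.1 + k := by omega
    rw [this, Nat.add_mod_right, Nat.mod_eq_of_lt i.2]
  exact Function.bijective_iff_has_inverse.2 ⟨prvI hk, h2, h1⟩

lemma cycle_cost_nonneg [Fintype V] (src tgt : A → V) (cap c x : A → ℤ) (ε : ℝ)
    (hε : 0 ≤ ε) (hn : ε < 1 / (Fintype.card V : ℝ))
    (π : V → ℝ) (hπ : ∀ p, IsResidual cap x p → -ε ≤ redcost src tgt c π p)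
    {k : ℕ} (hk : 0 < k) (cyc : Fin k → A × Bool)
    (hres : ∀ i, IsResidual cap x (cyc i))
    (hcyc : IsCycle (rsrc src tgt) (rtgt src tgt) hk cyc)
    (hinj : Function.Injective (fun i => rsrc src tgt (cyc i))) :
    0 ≤ ∑ i, rcost c (cyc i) := by
  have hkn : k ≤ Fintype.card V := by
    simpa using Fintype.card_le_of_injective _ hinj
  have htel : ∑ i, π (rtgt src tgt (cyc i)) = ∑ i, π (rsrc src tgt (cyc i)) := by
    calc ∑ i, π (rtgt src tgt (cyc i))
        = ∑ i, π (rsrc src tgt (cyc (nxtI hk i))) :=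
          Finset.sum_congr rfl (fun i _ => by rw [hcyc i]; rfl)
      _ = _ := Function.Bijective.sum_comp (nxtI_bij hk) (fun j => π (rsrc src tgt (cyc j)))
  have heq : ((∑ i, rcost c (cyc i) : ℤ) : ℝ) = ∑ i, redcost src tgt c π (cyc i) := by
    push_cast
    unfold redcost
    rw [Finset.sum_sub_distrib, Finset.sum_add_distrib, htel]
    ring
  have hge : (k : ℝ) * (-ε) ≤ ∑ i, redcost src tgt c π (cyc i) := by
    calc (k : ℝ) * (-ε) = ∑ _i : Fin k, (-ε) := by
          rw [Finset.sum_const, card_univ, Fintype.card_fin, nsmul_eq_mul]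
      _ ≤ _ := Finset.sum_le_sum (fun i _ => hπ _ (hres i))
  have hk0 : (0:ℝ) < (Fintype.card V : ℝ) := by
    have : 0 < Fintype.card V := lt_of_lt_of_le hk hkn
    exact_mod_cast this
  have hεn : ε * (Fintype.card V : ℝ) < 1 := (lt_div_iff₀ hk0).mp hn
  have h1 : (-1 : ℝ) < ((∑ i, rcost c (cyc i) : ℤ) : ℝ) := by
    rw [heq]
    have hkε : ε * (k : ℝ) ≤ ε * (Fintype.card V : ℝ) :=
      mul_le_mul_of_nonneg_left (by exact_mod_cast hkn) hε
    nlinarith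
  have : (-1 : ℤ) < ∑ i, rcost c (cyc i) := by exact_mod_cast h1
  omega

lemma exists_cycle [Fintype V] [Fintype A] [DecidableEq V] (src tgt : A → V)
    (z : A × Bool → ℤ) (hnn : ∀ p, 0 ≤ z p)
    (hcons : ∀ w : V, ∑ p ∈ univ.filter (fun p => rsrc src tgt p = w), z p
                    = ∑ p ∈ univ.filter (fun p => rtgt src tgt p = w), z p)
    (p0 : A × Bool) (hp0 : 0 < z p0) :
    ∃ (k : ℕ) (hk : 0 < k) (cyc : Fin k → A × Bool),
      IsCycle (rsrc src tgt) (rtgt src tgt) hk cyc ∧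
      Function.Injective (fun i => rsrc src tgt (cyc i)) ∧
      ∀ i, 0 < z (cyc i) := by
  classical
  have hsucc : ∀ p : A × Bool, 0 < z p →
      ∃ q, 0 < z q ∧ rsrc src tgt q = rtgt src tgt p := by
    intro p hp
    by_contra hcon
    push_neg at hcon
    set w := rtgt src tgt p with hw
    have hmem : p ∈ univ.filter (fun q => rtgt src tgt q = w) := by simp [hw]
    have hin : 0 < ∑ q ∈ univ.filter (fun q => rtgt src tgt q = w), z q :=
      lt_of_lt_of_le hp (Finset.single_le_sum (fun q _ => hnn q) hmem)
    have hout : ∑ q ∈ univ.filter (fun q => rsrc src tgt q = w), z q ≤ 0 := by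
      apply Finset.sum_nonpos
      intro q hq
      simp only [mem_filter, mem_univ, true_and] at hq
      rcases lt_or_ge 0 (z q) with h | h
      · exact absurd hq (hcon q h)
      · exact h
    rw [hcons w] at hout
    linarith
  let nxt : {p : A × Bool // 0 < z p} → {p : A × Bool // 0 < z p} := fun p =>
    ⟨(hsucc p.1 p.2).choose, (hsucc p.1 p.2).choose_spec.1⟩
  have hnxt : ∀ p, rsrc src tgt (nxt p).1 = rtgt src tgt p.1 :=
    fun p => (hsucc p.1 p.2).choose_spec.2
  let g : ℕ → {p : A × Bool // 0 < z p} := fun m => nxt^[m] ⟨p0, hp0⟩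
  have hg : ∀ m, rsrc src tgt (g (m+1)).1 = rtgt src tgt (g m).1 := by
    intro m
    have h1 : g (m+1) = nxt (g m) := Function.iterate_succ_apply' nxt m _
    rw [h1]; exact hnxt _
  set v : ℕ → V := fun m => rsrc src tgt (g m).1 with hv
  have hrep : ∃ j, ∃ i, i < j ∧ v i = v j := by
    have hni : ¬ Function.Injective (fun m : Fin (Fintype.card V + 1) => v m.1) := by
      intro hinj
      have := Fintype.card_le_of_injective _ hinj
      simp at this
    rw [Function.not_injective_iff] at hni
    obtain ⟨a, b, hab, hne⟩ := hni
    rcases hne.lt_or_gt with h | h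
    · exact ⟨b.1, a.1, h, hab⟩
    · exact ⟨a.1, b.1, h, hab.symm⟩
  obtain ⟨i0, hij0, hv0⟩ := Nat.find_spec hrep
  set j := Nat.find hrep with hj
  have hdist : ∀ a b, a < b → b < j → v a ≠ v b := by
    intro a b hab hbj hvab
    exact Nat.find_min hrep hbj ⟨a, hab, hvab⟩
  refine ⟨j - i0, by omega, fun t => (g (i0 + t.1)).1, ?_, ?_, fun t => (g (i0 + t.1)).2⟩
  · intro t
    show rtgt src tgt (g (i0 + t.1)).1 = v (i0 + (t.1 + 1) % (j - i0))
    rw [← hg]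
    rcases Nat.lt_or_ge (t.1 + 1) (j - i0) with h | h
    · rw [Nat.mod_eq_of_lt h]
      rfl
    · have ht : t.1 + 1 = j - i0 := by have := t.2; omega
      have hm : (t.1 + 1) % (j - i0) = 0 := by rw [ht]; exact Nat.mod_self _
      rw [hm]
      show v (i0 + t.1 + 1) = v (i0 + 0)
      have h2 : i0 + t.1 + 1 = j := by omega
      rw [h2]
      simpa using hv0.symm
  · intro s t hst
    simp only at hst
    apply Fin.ext
    by_contra hne
    rcases Nat.lt_or_ge s.1 t.1 with h | h
    · exact hdist (i0 + s.1) (i0 + t.1) (by omega) (by have := t.2; omega) hst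
    · have h' : t.1 < s.1 := by omega
      exact hdist (i0 + t.1) (i0 + s.1) (by omega) (by have := s.2; omega) hst.symm

lemma circ_cost_nonneg [Fintype V] [Fintype A] [DecidableEq V] (src tgt : A → V)
    (cap c x : A → ℤ) (ε : ℝ) (hε : 0 ≤ ε) (hn : ε < 1 / (Fintype.card V : ℝ))
    (π : V → ℝ) (hπ : ∀ p, IsResidual cap x p → -ε ≤ redcost src tgt c π p) :
    ∀ N : ℕ, ∀ z : A × Bool → ℤ, (∀ p, 0 ≤ z p) →
      (∑ p, z p ≤ (N : ℤ)) →
      (∀ w : V, ∑ p ∈ univ.filter (fun p => rsrc src tgt p = w), z p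
              = ∑ p ∈ univ.filter (fun p => rtgt src tgt p = w), z p) →
      (∀ p, 0 < z p → IsResidual cap x p) →
      0 ≤ ∑ p, rcost c p * z p := by
  intro N
  induction N with
  | zero =>
    intro z hnn hle _ _
    have hz : ∀ p, z p = 0 := by
      intro p
      have h1 := Finset.single_le_sum (fun q (_ : q ∈ univ) => hnn q) (mem_univ p)
      have h2 := hnn p
      push_cast at hle
      linarith
    rw [Finset.sum_eq_zero]
    intro p _
    rw [hz p]; ring
  | succ N ih =>
    intro z hnn hle hcons hres
    classical
    rcases em (∃ p, 0 < z p) with ⟨p0, hp0⟩ | hno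
    swap
    · push_neg at hno
      have hz : ∀ p, z p = 0 := fun p => le_antisymm (hno p) (hnn p)
      rw [Finset.sum_eq_zero]
      intro p _
      rw [hz p]; ring
    obtain ⟨k, hk, cyc, hcyc, hinj, hpos⟩ := exists_cycle src tgt z hnn hcons p0 hp0
    have hcycinj : Function.Injective cyc := by
      intro s t h
      exact hinj (show rsrc src tgt (cyc s) = rsrc src tgt (cyc t) by rw [h])
    set cnt : A × Bool → ℤ :=
      fun p => ((univ.filter (fun t : Fin k => cyc t = p)).card : ℤ) with hcntdef
    have hfiber : ∀ h : A × Bool → ℤ, ∑ t, h (cyc t) = ∑ p, cnt p * h p := by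
      intro h
      rw [← Finset.sum_fiberwise univ cyc (fun t => h (cyc t))]
      apply Finset.sum_congr rfl
      intro p _
      calc ∑ t ∈ univ.filter (fun t => cyc t = p), h (cyc t)
          = ∑ _t ∈ univ.filter (fun t => cyc t = p), h p :=
            Finset.sum_congr rfl (fun t ht => by rw [(mem_filter.1 ht).2])
        _ = cnt p * h p := by rw [Finset.sum_const, nsmul_eq_mul, hcntdef]
    have hcnt_nonneg : ∀ p, 0 ≤ cnt p := fun p => Int.natCast_nonneg _
    have hcnt_le : ∀ p, cnt p ≤ 1 := by
      intro p
      have h1 : (univ.filter (fun t : Fin k => cyc t = p)).card ≤ 1 := by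
        apply Finset.card_le_one.2
        intro a ha b hb
        exact hcycinj ((mem_filter.1 ha).2.trans (mem_filter.1 hb).2.symm)
      simp only [hcntdef]
      exact_mod_cast h1
    have hcnt_z : ∀ p, 0 < cnt p → 0 < z p := by
      intro p hp
      simp only [hcntdef] at hp
      have h1 : 0 < (univ.filter (fun t : Fin k => cyc t = p)).card := by exact_mod_cast hp
      obtain ⟨t, ht⟩ := Finset.card_pos.1 h1
      have h2 := (mem_filter.1 ht).2
      rw [← h2]
      exact hpos t
    set z' : A × Bool → ℤ := fun p => z p - cnt p with hz'def
    have hnn' : ∀ p, 0 ≤ z' p := by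
      intro p
      have h1 := hnn p
      have h2 := hcnt_le p
      have h3 := hcnt_nonneg p
      simp only [hz'def]
      by_cases hc : 0 < cnt p
      · have h4 := hcnt_z p hc
        omega
      · omega
    have hsumcnt : ∑ p, cnt p = (k : ℤ) := by
      have h := hfiber (fun _ => (1 : ℤ))
      simp only [mul_one] at h
      rw [← h]
      simp
    have hle' : ∑ p, z' p ≤ (N : ℤ) := by
      have h1 : ∑ p, z' p = ∑ p, z p - ∑ p, cnt p := by
        simp only [hz'def]
        rw [← Finset.sum_sub_distrib]
      have hk1 : (1 : ℤ) ≤ (k : ℤ) := by exact_mod_cast hk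
      rw [h1, hsumcnt]
      push_cast at hle ⊢
      linarith
    have hcons' : ∀ w : V, ∑ p ∈ univ.filter (fun p => rsrc src tgt p = w), z' p
        = ∑ p ∈ univ.filter (fun p => rtgt src tgt p = w), z' p := by
      intro w
      have e1 : ∑ p ∈ univ.filter (fun p => rsrc src tgt p = w), z' p
          = (∑ p ∈ univ.filter (fun p => rsrc src tgt p = w), z p)
            - ∑ p ∈ univ.filter (fun p => rsrc src tgt p = w), cnt p := by
        simp only [hz'def]
        rw [← Finset.sum_sub_distrib]
      have e2 : ∑ p ∈ univ.filter (fun p => rtgt src tgt p = w), z' p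
          = (∑ p ∈ univ.filter (fun p => rtgt src tgt p = w), z p)
            - ∑ p ∈ univ.filter (fun p => rtgt src tgt p = w), cnt p := by
        simp only [hz'def]
        rw [← Finset.sum_sub_distrib]
      have f1 : ∑ p ∈ univ.filter (fun p => rsrc src tgt p = w), cnt p
          = ∑ t : Fin k, (if rsrc src tgt (cyc t) = w then (1 : ℤ) else 0) := by
        rw [Finset.sum_filter,
          hfiber (fun p => if rsrc src tgt p = w then (1 : ℤ) else 0)]
        apply Finset.sum_congr rfl
        intro p _
        split <;> ring
      have f2 : ∑ p ∈ univ.filter (fun p => rtgt src tgt p = w), cnt p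
          = ∑ t : Fin k, (if rtgt src tgt (cyc t) = w then (1 : ℤ) else 0) := by
        rw [Finset.sum_filter,
          hfiber (fun p => if rtgt src tgt p = w then (1 : ℤ) else 0)]
        apply Finset.sum_congr rfl
        intro p _
        split <;> ring
      have f3 : ∑ t : Fin k, (if rtgt src tgt (cyc t) = w then (1 : ℤ) else 0)
          = ∑ t : Fin k, (if rsrc src tgt (cyc t) = w then (1 : ℤ) else 0) := by
        calc ∑ t : Fin k, (if rtgt src tgt (cyc t) = w then (1 : ℤ) else 0)
            = ∑ t : Fin k, (if rsrc src tgt (cyc (nxtI hk t)) = w then (1 : ℤ) else 0) :=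
              Finset.sum_congr rfl (fun t _ => by rw [hcyc t]; rfl)
          _ = _ := Function.Bijective.sum_comp (nxtI_bij hk)
              (fun t => if rsrc src tgt (cyc t) = w then (1 : ℤ) else 0)
      rw [e1, e2, hcons w, f1, f2, f3]
    have hres' : ∀ p, 0 < z' p → IsResidual cap x p := by
      intro p hp
      apply hres
      have h3 := hcnt_nonneg p
      simp only [hz'def] at hp
      omega
    have hcost : ∑ p, rcost c p * z p = ∑ p, rcost c p * z' p + ∑ t, rcost c (cyc t) := by
      rw [hfiber (rcost c), ← Finset.sum_add_distrib]
      apply Finset.sum_congr rfl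
      intro p _
      simp only [hz'def]
      ring
    have hcycnn : 0 ≤ ∑ t, rcost c (cyc t) :=
      cycle_cost_nonneg src tgt cap c x ε hε hn π hπ hk cyc (fun t => hres _ (hpos t))
        hcyc hinj
    have hih := ih z' hnn' hle' hcons' hres'
    rw [hcost]
    linarith

/-- with integer costs, an `ε`-optimal feasible flow with `ε < 1/n`
is an optimal solution. -/
theorem eps_opt_lt_inv_card_is_optimal [Fintype V] [Fintype A] [DecidableEq V]
    (src tgt : A → V) (b : V → ℤ) (cap c x : A → ℤ) (ε : ℝ)
    (hε : 0 ≤ ε) (hn : ε < 1 / (Fintype.card V : ℝ))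
    (hfeas : IsFeasible src tgt b cap x)
    (hepsopt : ∃ π : V → ℝ, ∀ p : A × Bool, IsResidual cap x p →
        -ε ≤ redcost src tgt c π p) :
    IsOptimal src tgt b cap c x := by
  obtain ⟨π, hπ⟩ := hepsopt
  refine ⟨hfeas, fun y hy => ?_⟩
  classical
  set z : A × Bool → ℤ := fun p =>
    if p.2 then max (y p.1 - x p.1) 0 else max (x p.1 - y p.1) 0 with hzdef
  have hnn : ∀ p, 0 ≤ z p := by
    intro p
    simp only [hzdef]
    split <;> exact le_max_right _ _
  have hres : ∀ p, 0 < z p → IsResidual cap x p := by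
    rintro ⟨a, b'⟩ hp
    cases b' with
    | true =>
      have hzp : 0 < max (y a - x a) 0 := by simpa [hzdef] using hp
      have h1 : x a < y a := by
        rcases lt_max_iff.mp hzp with h | h
        · omega
        · omega
      have h2 := (hy.1 a).2
      show x a < cap a
      omega
    | false =>
      have hzp : 0 < max (x a - y a) 0 := by simpa [hzdef] using hp
      have h1 : y a < x a := by
        rcases lt_max_iff.mp hzp with h | h
        · omega
        · omega
      have h2 := (hy.1 a).1
      show 0 < x a
      omega
  have key : ∀ a, max (y a - x a) 0 - max (x a - y a) 0 = y a - x a := by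
    intro a
    rcases le_total (x a) (y a) with h | h
    · rw [max_eq_left (by omega : (0:ℤ) ≤ y a - x a),
        max_eq_right (by omega : x a - y a ≤ (0:ℤ))]
      ring
    · rw [max_eq_right (by omega : y a - x a ≤ (0:ℤ)),
        max_eq_left (by omega : (0:ℤ) ≤ x a - y a)]
      ring
  have ex : ∀ u : A → ℤ, IsFeasible src tgt b cap u → ∀ w : V,
      b w + (∑ a, if tgt a = w then u a else 0) - (∑ a, if src a = w then u a else 0)
        = 0 := by
    intro u hu w
    have h := hu.2 w
    unfold excess at h
    rwa [Finset.sum_filter, Finset.sum_filter] at h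
  have hdiff : ∀ w : V, (∑ a, if src a = w then y a - x a else 0)
      = ∑ a, if tgt a = w then y a - x a else 0 := by
    intro w
    have h1 := ex x hfeas w
    have h2 := ex y hy w
    have e1 : (∑ a, if src a = w then y a - x a else 0)
        = (∑ a, if src a = w then y a else 0) - ∑ a, if src a = w then x a else 0 := by
      rw [← Finset.sum_sub_distrib]
      exact Finset.sum_congr rfl (fun a _ => by split <;> ring)
    have e2 : (∑ a, if tgt a = w then y a - x a else 0)
        = (∑ a, if tgt a = w then y a else 0) - ∑ a, if tgt a = w then x a else 0 := by
      rw [← Finset.sum_sub_distrib]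
      exact Finset.sum_congr rfl (fun a _ => by split <;> ring)
    rw [e1, e2]
    linarith
  have hcons : ∀ w : V, ∑ p ∈ univ.filter (fun p => rsrc src tgt p = w), z p
      = ∑ p ∈ univ.filter (fun p => rtgt src tgt p = w), z p := by
    intro w
    have ls : ∑ p ∈ univ.filter (fun p => rsrc src tgt p = w), z p
        = (∑ a, if src a = w then max (y a - x a) 0 else 0)
          + ∑ a, if tgt a = w then max (x a - y a) 0 else 0 := by
      rw [Finset.sum_filter, Fintype.sum_prod_type, ← Finset.sum_add_distrib]
      apply Finset.sum_congr rfl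
      intro a _
      rw [Fintype.sum_bool]
      simp [rsrc, hzdef]
    have rs : ∑ p ∈ univ.filter (fun p => rtgt src tgt p = w), z p
        = (∑ a, if tgt a = w then max (y a - x a) 0 else 0)
          + ∑ a, if src a = w then max (x a - y a) 0 else 0 := by
      rw [Finset.sum_filter, Fintype.sum_prod_type, ← Finset.sum_add_distrib]
      apply Finset.sum_congr rfl
      intro a _
      rw [Fintype.sum_bool]
      simp [rtgt, hzdef]
    have c1 : (∑ a, if src a = w then max (y a - x a) 0 else 0)
        - (∑ a, if src a = w then max (x a - y a) 0 else 0)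
        = ∑ a, if src a = w then y a - x a else 0 := by
      rw [← Finset.sum_sub_distrib]
      apply Finset.sum_congr rfl
      intro a _
      split
      · exact key a
      · ring
    have c2 : (∑ a, if tgt a = w then max (y a - x a) 0 else 0)
        - (∑ a, if tgt a = w then max (x a - y a) 0 else 0)
        = ∑ a, if tgt a = w then y a - x a else 0 := by
      rw [← Finset.sum_sub_distrib]
      apply Finset.sum_congr rfl
      intro a _
      split
      · exact key a
      · ring
    have hd := hdiff w
    rw [ls, rs]
    linarith
  have hcost : ∑ p, rcost c p * z p = flowCost c y - flowCost c x := by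
    unfold flowCost
    rw [Fintype.sum_prod_type, ← Finset.sum_sub_distrib]
    apply Finset.sum_congr rfl
    intro a _
    rw [Fintype.sum_bool]
    show c a * max (y a - x a) 0 + -c a * max (x a - y a) 0 = c a * y a - c a * x a
    linear_combination (c a) * key a
  have hnt : ∑ p, z p ≤ (((∑ p, z p).toNat : ℕ) : ℤ) := Int.self_le_toNat _
  have h0 := circ_cost_nonneg src tgt cap c x ε hε hn π hπ (∑ p, z p).toNat z hnn hnt
    hcons hres
  rw [hcost] at h0
  linarith
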